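/- For even n ≥ 4, consider the ℤ-linear map d : ℤ^{n(n-1)} → ℤ^{n(n-1)/2} defined on generators S_{i,(c)} (indexed by a crossing i ∈ {1,...,n} and one of the n-1 choices c) whose images are sums/differences of two basis vectors S_{i,j} (1 ≤ i < j ≤ n) as follows: for each fixed i, the (n-1)×(n-1) block of d restricted to generators with first index i is, up to signs of columns, the circulant matrix with 1's on the diagonal and superdiagonal. Then coker(d) ≅ ℤ/2ℤ, generated by the class of any single basis vector S_{i,j}. -/
import Mathlib


/-- Abstract form of Lemma 3.1: for even n ≥ 4, the map d : ℤ^{n(n-1)} → ℤ^{n(n-1)/2} on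
generators S_{i,(c)} (i a crossing, c one of n-1 choices) whose block for each fixed i is,
up to signs of columns, the circulant matrix with 1's on the diagonal and superdiagonal
(target basis the unordered pairs S_{i,j} = S_{j,i}, i ≠ j), has cokernel ℤ/2ℤ generated
by the class of any single basis vector S_{i,j}. -/
theorem torus_link_even_coker
    (n : ℕ) (heven : Even n) (hn : 4 ≤ n)
    (ι : Type) [Fintype ι] [DecidableEq ι]
    (pr : Fin n → Fin n → ι)
    (hpr_symm : ∀ i j, pr i j = pr j i)
    (hpr_inj : ∀ i j i' j' : Fin n, i ≠ j → i' ≠ j' →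
      (pr i j = pr i' j' ↔ (i = i' ∧ j = j') ∨ (i = j' ∧ j = i')))
    (hpr_surj : ∀ c : ι, ∃ i j, i ≠ j ∧ pr i j = c)
    (o : Fin n → ℕ → Fin n)
    (ho_per : ∀ i m, o i (m + (n - 1)) = o i m)
    (ho_ne : ∀ i m, o i m ≠ i)
    (ho_inj : ∀ i a b, a < n - 1 → b < n - 1 → o i a = o i b → a = b)
    (ho_surj : ∀ i j, j ≠ i → ∃ m, m < n - 1 ∧ o i m = j)
    (ε : Fin n → Fin n → ℤ) (hε : ∀ i j, ε i j = 1 ∨ ε i j = -1)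
    (D : Matrix ι (Fin n × Fin (n - 1)) ℤ)
    (hD : ∀ (i : Fin n) (k : Fin (n - 1)) (c : ι),
      D c (i, k) = ε i (o i (k : ℕ)) * (if c = pr i (o i (k : ℕ)) then 1 else 0) +
        ε i (o i ((k : ℕ) + 1)) * (if c = pr i (o i ((k : ℕ) + 1)) then 1 else 0)) :
    Nonempty (((ι → ℤ) ⧸ LinearMap.range D.mulVecLin) ≃+ ZMod 2) ∧
    ∀ (i j : Fin n), i ≠ j →
      ∀ x : (ι → ℤ) ⧸ LinearMap.range D.mulVecLin,
        ∃ m : ℤ, x = m • (Submodule.Quotient.mk (Pi.single (pr i j) 1)) := by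
  classical
  have hn1 : 0 < n - 1 := by omega
  set R := LinearMap.range D.mulVecLin with hR
  set w : Fin n → ℕ → (ι → ℤ) :=
    fun i m => ε i (o i m) • Pi.single (pr i (o i m)) 1 with hw
  -- o is periodic mod (n-1)
  have ho_mod : ∀ i m, o i (m % (n - 1)) = o i m := by
    intro i m
    conv_rhs => rw [← Nat.mod_add_div m (n - 1)]
    generalize m / (n - 1) = t
    induction t with
    | zero => simp
    | succ t ih => rw [Nat.mul_succ, ← Nat.add_assoc, ho_per, ih]
  -- columns of D lie in R
  have hcol : ∀ (i : Fin n) (k : Fin (n - 1)), (fun c => D c (i, k)) ∈ R := by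
    intro i k
    refine ⟨Pi.single (i, k) 1, ?_⟩
    funext c
    simp [Matrix.mulVecLin_apply, Matrix.mulVec_single]
  -- consecutive relation
  have hv : ∀ (i : Fin n) (k : ℕ), w i k + w i (k + 1) ∈ R := by
    intro i k
    have hk' : k % (n - 1) < n - 1 := Nat.mod_lt _ hn1
    have h1 : o i (k % (n - 1)) = o i k := ho_mod i k
    have h2 : o i (k % (n - 1) + 1) = o i (k + 1) := by
      rw [← ho_mod i (k + 1), ← ho_mod i (k % (n - 1) + 1)]
      congr 1
      exact (Nat.mod_modEq k (n - 1)).add_right 1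
    have := hcol i ⟨k % (n - 1), hk'⟩
    convert this using 1
    funext c
    simp only [hD i ⟨k % (n - 1), hk'⟩ c, hw, Pi.add_apply, Pi.smul_apply,
      Pi.single_apply, smul_eq_mul, h1, h2]
  set q := R.mkQ with hq
  have hwk : ∀ (i : Fin n) (k : ℕ), q (w i (k + 1)) = - q (w i k) := by
    intro i k
    have h0 : q (w i k + w i (k + 1)) = 0 := by
      rw [hq, Submodule.mkQ_apply, Submodule.Quotient.mk_eq_zero]
      exact hv i k
    rw [map_add] at h0
    exact eq_neg_of_add_eq_zero_left (by rwa [add_comm] at h0)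
  -- q (w i m) = (-1)^m • q (w i 0)
  have hpow : ∀ (i : Fin n) (m : ℕ), q (w i m) = ((-1 : ℤ) ^ m) • q (w i 0) := by
    intro i m
    induction m with
    | zero => simp
    | succ m ih =>
      rw [hwk i m, ih, pow_succ, mul_comm, neg_one_mul, neg_smul]
  -- w i (n-1) = w i 0
  have hper0 : ∀ i : Fin n, w i (n - 1) = w i 0 := by
    intro i
    have := ho_per i 0
    rw [Nat.zero_add] at this
    simp only [hw, this]
  -- 2 • q (w i 0) = 0
  have h2u : ∀ i : Fin n, (2 : ℤ) • q (w i 0) = 0 := by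
    intro i
    have hodd : Odd (n - 1) := Nat.Even.sub_odd (by omega) heven odd_one
    have h1 : q (w i 0) = - q (w i 0) := by
      conv_lhs => rw [← hper0 i, hpow i (n - 1), hodd.neg_one_pow]
      rw [neg_smul, one_smul]
    rw [two_smul, add_eq_zero_iff_eq_neg]
    exact h1
  have hneg : ∀ i : Fin n, - q (w i 0) = q (w i 0) := by
    intro i
    have := h2u i
    rw [two_smul] at this
    exact (neg_eq_of_add_eq_zero_left this)
  have habs : ∀ (a : ℤ), (a = 1 ∨ a = -1) → ∀ i : Fin n, a • q (w i 0) = q (w i 0) := by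
    rintro a (rfl | rfl) i
    · rw [one_smul]
    · rw [neg_smul, one_smul, hneg]
  -- every basis class with first index i equals q (w i 0)
  have hsingle : ∀ (i j : Fin n), j ≠ i →
      q (Pi.single (pr i j) 1) = q (w i 0) := by
    intro i j hj
    obtain ⟨m, hm, rfl⟩ := ho_surj i j hj
    have hee : (Pi.single (pr i (o i m)) (1 : ℤ) : ι → ℤ) = ε i (o i m) • w i m := by
      simp only [hw, smul_smul]
      rcases hε i (o i m) with h | h <;> rw [h] <;> norm_num
    rw [hee, map_smul, hpow i m, smul_smul]
    apply habs
    rcases hε i (o i m) with h | h <;> rw [h] <;>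
      rcases Nat.even_or_odd m with hp | hp
    · left; rw [hp.neg_one_pow]; ring
    · right; rw [hp.neg_one_pow]; ring
    · right; rw [hp.neg_one_pow]; ring
    · left; rw [hp.neg_one_pow]; ring
  -- the common value
  have hconst : ∀ (i i' : Fin n), q (w i 0) = q (w i' 0) := by
    intro i i'
    rcases eq_or_ne i i' with rfl | hii
    · rfl
    · rw [← hsingle i i' (Ne.symm hii), hpr_symm, hsingle i' i hii]
  set i₀ : Fin n := ⟨0, by omega⟩ with hi₀
  set j₀ : Fin n := ⟨1, by omega⟩ with hj₀
  have hij₀ : j₀ ≠ i₀ := by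
    simp only [hi₀, hj₀, ne_eq, Fin.mk.injEq]
    omega
  set u₀ := q (w i₀ 0) with hu₀
  have h2u₀ : (2 : ℤ) • u₀ = 0 := h2u i₀
  -- every basis class equals u₀
  have hc_all : ∀ c : ι, q (Pi.single c 1) = u₀ := by
    intro c
    obtain ⟨i, j, hij, rfl⟩ := hpr_surj c
    rw [hsingle i j (Ne.symm hij), hconst i i₀]
  -- any even-sum vector is in R
  have hqf : ∀ f : ι → ℤ, (2 : ℤ) ∣ (∑ c, f c) → f ∈ R := by
    intro f hf
    obtain ⟨t, ht⟩ := hf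
    have hfd : f = ∑ c, f c • Pi.single c (1 : ℤ) := by
      conv_lhs => rw [← Finset.univ_sum_single f]
      refine Finset.sum_congr rfl fun c _ => ?_
      rw [← Pi.single_smul, smul_eq_mul, mul_one]
    have hqf0 : q f = 0 := by
      rw [hfd, map_sum]
      simp_rw [map_smul, hc_all]
      rw [← Finset.sum_smul, ht, mul_comm, mul_smul, h2u₀, smul_zero]
    rw [hq, Submodule.mkQ_apply, Submodule.Quotient.mk_eq_zero] at hqf0
    exact hqf0
  -- the parity functional
  set σ : (ι → ℤ) →ₗ[ℤ] ZMod 2 :=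
    { toFun := fun f => ∑ c, ((f c : ℤ) : ZMod 2),
      map_add' := by intro f g; simp [Finset.sum_add_distrib]
      map_smul' := by
        intro m f
        simp only [Pi.smul_apply, smul_eq_mul, Int.cast_mul, RingHom.id_apply,
          zsmul_eq_mul, Finset.mul_sum] } with hσ
  have hσ_single : ∀ (c : ι) (m : ℤ), σ (Pi.single c m) = (m : ZMod 2) := by
    intro c m
    have hrfl : σ (Pi.single c m) = ∑ c', (((Pi.single c m : ι → ℤ) c' : ℤ) : ZMod 2) := rfl
    rw [hrfl, Finset.sum_eq_single c]
    · rw [Pi.single_eq_same]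
    · intro b _ hb
      rw [Pi.single_eq_of_ne hb]
      norm_num
    · intro hc
      exact absurd (Finset.mem_univ c) hc
  -- σ kills R
  have hσR : ∀ x ∈ R, σ x = 0 := by
    rintro x ⟨v, rfl⟩
    have key : ∀ x : Fin n × Fin (n - 1), (∑ c, ((D c x : ℤ) : ZMod 2)) = 0 := by
      rintro ⟨i, k⟩
      simp only [hD i k]
      push_cast
      rw [Finset.sum_add_distrib, ← Finset.mul_sum, ← Finset.mul_sum]
      have e1 : (∑ c, (if c = pr i (o i (k : ℕ)) then (1 : ZMod 2) else 0)) = 1 := by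
        rw [Finset.sum_ite_eq' Finset.univ (pr i (o i (k : ℕ))) (fun _ => (1 : ZMod 2))]
        simp
      have e2 : (∑ c, (if c = pr i (o i ((k : ℕ) + 1)) then (1 : ZMod 2) else 0)) = 1 := by
        rw [Finset.sum_ite_eq' Finset.univ (pr i (o i ((k : ℕ) + 1))) (fun _ => (1 : ZMod 2))]
        simp
      rw [e1, e2, mul_one, mul_one]
      rcases hε i (o i (k : ℕ)) with h1 | h1 <;> rcases hε i (o i ((k : ℕ) + 1)) with h2 | h2 <;>
        rw [h1, h2] <;> decide
    show ∑ c, ((D.mulVecLin v c : ℤ) : ZMod 2) = 0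
    simp only [Matrix.mulVecLin_apply, Matrix.mulVec, dotProduct]
    push_cast
    rw [Finset.sum_comm]
    refine Finset.sum_eq_zero fun x _ => ?_
    rw [← Finset.sum_mul, key x, zero_mul]
  have hker : ∀ f, σ f = 0 → f ∈ R := by
    intro f hf
    apply hqf
    have hcast : ((∑ c, f c : ℤ) : ZMod 2) = 0 := by
      push_cast
      exact hf
    have := (ZMod.intCast_zmod_eq_zero_iff_dvd _ 2).1 hcast
    exact_mod_cast this
  constructor
  · -- the equivalence
    have hle : R ≤ LinearMap.ker σ := fun x hx => LinearMap.mem_ker.2 (hσR x hx)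
    set φ : ((ι → ℤ) ⧸ R) →ₗ[ℤ] ZMod 2 := R.liftQ σ hle with hφ
    have hinj : Function.Injective φ := by
      rw [← LinearMap.ker_eq_bot, hφ, Submodule.ker_liftQ_eq_bot]
      intro f hf
      exact hker f (LinearMap.mem_ker.1 hf)
    have hsurj : Function.Surjective φ := by
      intro z
      refine ⟨Submodule.Quotient.mk (Pi.single (pr i₀ j₀) (z.val : ℤ)), ?_⟩
      have : φ (Submodule.Quotient.mk (Pi.single (pr i₀ j₀) (z.val : ℤ))) =
          σ (Pi.single (pr i₀ j₀) (z.val : ℤ)) := rfl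
      rw [this, hσ_single]
      push_cast
      exact ZMod.natCast_rightInverse z
    exact ⟨(LinearEquiv.ofBijective φ ⟨hinj, hsurj⟩).toAddEquiv⟩
  · -- generation
    intro i j hij x
    obtain ⟨f, rfl⟩ := Submodule.Quotient.mk_surjective R x
    by_cases h : σ f = 0
    · refine ⟨0, ?_⟩
      rw [zero_smul]
      exact (Submodule.Quotient.mk_eq_zero R).2 (hker f h)
    · refine ⟨1, ?_⟩
      have h1 : σ f = 1 := by
        have : ∀ z : ZMod 2, z ≠ 0 → z = 1 := by decide
        exact this _ h
      have hd : σ (f - Pi.single (pr i j) 1) = 0 := by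
        rw [map_sub, h1, hσ_single]
        norm_num
      rw [one_smul]
      exact (Submodule.Quotient.eq R).2 (hker _ hd)
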